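/- arXiv:2302.05652 — 8 statements merged into one kernel-verified Lean document; each statement's English description precedes it below -/
import Mathlib

section
/- A graph G on n vertices is distance magic if and only if the set of integers p ≥ 1 for which G is p-distance magic is infinite. -/
open Finset

/-- A graph `G` on `n` vertices is distance magic: there is a bijection assigning the
labels `1,…,n` (here `v ↦ f v + 1`) so that all vertex weights equal a constant. -/
def IsDistanceMagic {n : ℕ} (G : SimpleGraph (Fin n)) [DecidableRel G.Adj] : Prop :=
  ∃ f : Fin n ≃ Fin n, ∃ k : ℕ, ∀ v, ∑ u ∈ G.neighborFinset v, ((f u : ℕ) + 1) = k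

/-- A graph `G` on `n` vertices is `p`-distance magic: there is a labeling whose multiset
of values is `{1,2,…,n}_p` (the reductions of `1,…,n` modulo `p`, with `0` replaced by `p`,
i.e. the multiset `{(i % p) + 1 : i ∈ range n}`) such that all vertex weights are congruent
to one common value modulo `p`. -/
def IsPDistanceMagic {n : ℕ} (G : SimpleGraph (Fin n)) [DecidableRel G.Adj] (p : ℕ) : Prop :=
  ∃ f : Fin n → ℕ,
    Multiset.map f Finset.univ.val = (Multiset.range n).map (fun i => i % p + 1) ∧
    ∃ μ : ℕ, ∀ v, (∑ u ∈ G.neighborFinset v, f u) % p = μ % p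

lemma univ_val_map_fin_val {n : ℕ} :
    Multiset.map Fin.val (Finset.univ : Finset (Fin n)).val = Multiset.range n := by
  have h := congr_arg Finset.val (Fin.map_valEmbedding_univ (n := n))
  rw [Finset.map_val, Nat.Iio_eq_range] at h
  exact h

/-- A graph `G` is distance magic if and only if the set of integers
`p ≥ 1` for which `G` is `p`-distance magic is infinite. -/
theorem distance_magic_iff_infinitely_many_p {n : ℕ} (G : SimpleGraph (Fin n))
    [DecidableRel G.Adj] :
    IsDistanceMagic G ↔ {p : ℕ | 1 ≤ p ∧ IsPDistanceMagic G p}.Infinite := by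
  constructor
  · rintro ⟨f, k, hk⟩
    have hsub : Set.Ici 1 ⊆ {p : ℕ | 1 ≤ p ∧ IsPDistanceMagic G p} := by
      intro p hp
      refine ⟨hp, fun v => ((f v : ℕ) % p + 1), ?_, k, ?_⟩
      · have h1 : Multiset.map (fun v => ((f v : ℕ) % p + 1)) Finset.univ.val
            = Multiset.map (fun i => i % p + 1)
              (Multiset.map Fin.val (Multiset.map f Finset.univ.val)) := by
          rw [Multiset.map_map, Multiset.map_map]; rfl
        have h2 : Multiset.map f (Finset.univ : Finset (Fin n)).val
            = (Finset.univ : Finset (Fin n)).val := by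
          have := congr_arg Finset.val (Finset.map_univ_equiv f)
          simpa [Finset.map_val, Equiv.coe_toEmbedding] using this
        rw [h1, h2, univ_val_map_fin_val]
      · intro v
        have hcong : ∀ u : Fin n, ((f u : ℕ) % p + 1) % p = ((f u : ℕ) + 1) % p := by
          intro u
          exact (Nat.ModEq.add_right 1 (Nat.mod_modEq (f u : ℕ) p))
        calc (∑ u ∈ G.neighborFinset v, ((f u : ℕ) % p + 1)) % p
            = (∑ u ∈ G.neighborFinset v, ((f u : ℕ) % p + 1) % p) % p :=
              Finset.sum_nat_mod _ _ _
          _ = (∑ u ∈ G.neighborFinset v, ((f u : ℕ) + 1) % p) % p := by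
              simp_rw [hcong]
          _ = (∑ u ∈ G.neighborFinset v, ((f u : ℕ) + 1)) % p :=
              (Finset.sum_nat_mod _ _ _).symm
          _ = k % p := by rw [hk v]
    exact Set.Infinite.mono hsub (Set.Ici_infinite 1)
  · rintro hinf
    obtain ⟨p, hp, hgt⟩ := hinf.exists_gt (n * n + n)
    obtain ⟨hp1, f, hmul, μ, hμ⟩ := hp
    -- p > n, so the target multiset is exactly {1,…,n}
    have hpn : n ≤ p := by nlinarith
    have htarget : (Multiset.range n).map (fun i => i % p + 1)
        = (Multiset.range n).map (fun i => i + 1) := by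
      apply Multiset.map_congr rfl
      intro i hi
      rw [Multiset.mem_range] at hi
      rw [Nat.mod_eq_of_lt (lt_of_lt_of_le hi hpn)]
    rw [htarget] at hmul
    -- each value of f is between 1 and n
    have hval : ∀ v : Fin n, 1 ≤ f v ∧ f v ≤ n := by
      intro v
      have hv : f v ∈ Multiset.map f Finset.univ.val :=
        Multiset.mem_map_of_mem f (Finset.mem_univ v)
      rw [hmul, Multiset.mem_map] at hv
      obtain ⟨i, hi, hiv⟩ := hv
      rw [Multiset.mem_range] at hi
      omega
    -- f is injective
    have hnodup : (Multiset.map f Finset.univ.val).Nodup := by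
      rw [hmul]
      exact (Multiset.nodup_range n).map (fun a b => by omega)
    have hinj : Function.Injective f := fun a b hab =>
      Multiset.inj_on_of_nodup_map hnodup a (Finset.mem_univ a) b (Finset.mem_univ b) hab
    -- build the equivalence
    let g : Fin n → Fin n := fun v => ⟨f v - 1, by have := hval v; omega⟩
    have hginj : Function.Injective g := by
      intro a b hab
      apply hinj
      have h1 := (hval a).1
      have h2 := (hval b).1
      have := congr_arg Fin.val hab
      simp only [g] at this
      omega
    have hgbij : Function.Bijective g := Finite.injective_iff_bijective.mp hginj
    refine ⟨Equiv.ofBijective g hgbij, μ % p, fun v => ?_⟩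
    have hge : ∀ u : Fin n, ((Equiv.ofBijective g hgbij) u : ℕ) + 1 = f u := by
      intro u
      have := (hval u).1
      simp only [Equiv.ofBijective_apply, g]
      omega
    -- total sum bound
    have hsum_total : ∑ u : Fin n, f u ≤ n * n := by
      have : ∑ u : Fin n, f u = (Multiset.map f Finset.univ.val).sum := rfl
      rw [this, hmul]
      calc ((Multiset.range n).map (fun i => i + 1)).sum
          ≤ ((Multiset.range n).map (fun _ => n)).sum := by
            apply Multiset.sum_map_le_sum_map
            intro i hi
            rw [Multiset.mem_range] at hi
            omega
        _ = n * n := by simp [Multiset.map_const', mul_comm]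
    have hwb : ∑ u ∈ G.neighborFinset v, f u ≤ n * n := by
      refine le_trans (Finset.sum_le_sum_of_subset (Finset.subset_univ _)) hsum_total
    have hlt : ∑ u ∈ G.neighborFinset v, f u < p := by omega
    have := hμ v
    rw [Nat.mod_eq_of_lt hlt] at this
    calc ∑ u ∈ G.neighborFinset v, (((Equiv.ofBijective g hgbij) u : ℕ) + 1)
        = ∑ u ∈ G.neighborFinset v, f u := Finset.sum_congr rfl (fun u _ => hge u)
      _ = μ % p := this
end

section
/- A graph G on n vertices is distance magic if and only if G is p-distance magic for every integer p ≥ 1. -/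
open Finset

lemma aux_val_univ (n : ℕ) :
    Multiset.map (fun v : Fin n => (v : ℕ)) Finset.univ.val = Multiset.range n := by
  have h := congrArg Finset.val (Fin.map_valEmbedding_univ (n := n))
  rw [Nat.Iio_eq_range] at h
  simpa [Finset.map, Finset.range] using h

lemma aux_equiv_univ (n : ℕ) (f : Fin n ≃ Fin n) :
    Multiset.map (fun v => f v) Finset.univ.val = Finset.univ.val := by
  have h := congrArg Finset.val (Finset.map_univ_equiv f)
  simp only [Finset.map] at h
  exact h


/-- A graph `G` on `n` vertices is distance magic if and only if it is
`p`-distance magic for every integer `p ≥ 1`. -/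
theorem distance_magic_iff_all_p {n : ℕ} (G : SimpleGraph (Fin n)) [DecidableRel G.Adj] :
    IsDistanceMagic G ↔ ∀ p : ℕ, 1 ≤ p → IsPDistanceMagic G p := by
  constructor
  · rintro ⟨f, k, hk⟩ p hp
    refine ⟨fun v => (f v : ℕ) % p + 1, ?_, k, ?_⟩
    · have h1 : Multiset.map (fun v : Fin n => (v : ℕ))
          (Multiset.map (fun v => f v) Finset.univ.val) = Multiset.range n := by
        rw [aux_equiv_univ, aux_val_univ]
      rw [← h1, Multiset.map_map, Multiset.map_map]
      rfl
    · intro v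
      rw [← hk v]
      rw [Finset.sum_nat_mod, Finset.sum_nat_mod (s := G.neighborFinset v) (f := fun u => (f u : ℕ) + 1)]
      congr 1
      apply Finset.sum_congr rfl
      intro u _
      conv_rhs => rw [Nat.add_mod]
      rw [Nat.add_mod, Nat.mod_mod_of_dvd _ dvd_rfl]
  · intro h
    obtain ⟨f, hmul, μ, hμ⟩ := h (n * n + 1) (by omega)
    set p := n * n + 1 with hpdef
    have hmod : ∀ i < n, i % p = i := by
      intro i hi
      apply Nat.mod_eq_of_lt
      nlinarith
    have hmul' : Multiset.map f Finset.univ.val = (Multiset.range n).map (fun i => i + 1) := by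
      rw [hmul]
      apply Multiset.map_congr rfl
      intro i hi
      rw [hmod i (Multiset.mem_range.mp hi)]
    -- each value f v = i + 1 for some i < n
    have hval : ∀ v : Fin n, 1 ≤ f v ∧ f v ≤ n := by
      intro v
      have : f v ∈ Multiset.map f Finset.univ.val :=
        Multiset.mem_map_of_mem f (Finset.mem_univ v)
      rw [hmul'] at this
      obtain ⟨i, hi, hfi⟩ := Multiset.mem_map.mp this
      rw [Multiset.mem_range] at hi
      omega
    have hnodup : (Multiset.map f Finset.univ.val).Nodup := by
      rw [hmul']
      exact (Multiset.nodup_range n).map (fun a b => by omega)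
    have hinj : Function.Injective f := by
      intro a b hab
      have := Multiset.inj_on_of_nodup_map hnodup
      exact this a (Finset.mem_univ a) b (Finset.mem_univ b) hab
    let e : Fin n → Fin n := fun v => ⟨f v - 1, by have := hval v; omega⟩
    have heinj : Function.Injective e := by
      intro a b hab
      apply hinj
      have h1 := hval a; have h2 := hval b
      have : f a - 1 = f b - 1 := congrArg Fin.val hab
      omega
    have hbij : Function.Bijective e := (Finite.injective_iff_bijective).mp heinj
    refine ⟨Equiv.ofBijective e hbij, μ % p, ?_⟩
    intro v
    have hsum : ∑ u ∈ G.neighborFinset v, ((Equiv.ofBijective e hbij u : ℕ) + 1)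
        = ∑ u ∈ G.neighborFinset v, f u := by
      apply Finset.sum_congr rfl
      intro u _
      have := hval u
      show (f u - 1) + 1 = f u
      omega
    rw [hsum]
    have hbound : ∑ u ∈ G.neighborFinset v, f u ≤ n * n := by
      calc ∑ u ∈ G.neighborFinset v, f u ≤ ∑ _u ∈ G.neighborFinset v, n :=
            Finset.sum_le_sum (fun u _ => (hval u).2)
        _ = (G.neighborFinset v).card * n := by rw [Finset.sum_const, smul_eq_mul]
        _ ≤ n * n := by
            have := Finset.card_le_univ (G.neighborFinset v)
            simp only [Finset.card_univ, Fintype.card_fin] at this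
            exact Nat.mul_le_mul_right n this
    have := hμ v
    rw [Nat.mod_eq_of_lt (by omega)] at this
    exact this
end

section
/- A graph G on n vertices is distance magic if and only if G is p-distance magic for every prime number p. -/
open Finset

/-- A graph `G` on `n` vertices is distance magic if and only if it is
`p`-distance magic for every prime number `p`. -/
theorem distance_magic_iff_all_primes {n : ℕ} (G : SimpleGraph (Fin n)) [DecidableRel G.Adj] :
    IsDistanceMagic G ↔ ∀ p : ℕ, p.Prime → IsPDistanceMagic G p := by
  constructor
  · rintro ⟨f, k, hk⟩ p hp
    refine ⟨fun v => (f v : ℕ) % p + 1, ?_, k, ?_⟩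
    · have h1 : Multiset.map (fun v : Fin n => ((f v : ℕ) % p + 1)) Finset.univ.val
          = Multiset.map (fun i : ℕ => i % p + 1)
              (Multiset.map (fun v : Fin n => (f v : ℕ)) Finset.univ.val) := by
        rw [Multiset.map_map]; rfl
      have h2 : Multiset.map (fun v : Fin n => (f v : ℕ)) Finset.univ.val
          = Multiset.map Fin.val (Multiset.map f Finset.univ.val) := by
        rw [Multiset.map_map]; rfl
      have h3 : Multiset.map f Finset.univ.val = Finset.univ.val := by
        have := Finset.map_univ_equiv f
        have := congrArg Finset.val this
        simpa using this
      have h4 : Multiset.map Fin.val (Finset.univ.val : Multiset (Fin n))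
          = Multiset.range n := by
        have h : (Finset.range n) = (Finset.univ : Finset (Fin n)).map Fin.valEmbedding := by
          ext x; simp [Fin.exists_iff]
        have h' := congrArg Finset.val h
        simp only [Finset.map_val, Finset.range_val] at h'
        exact h'.symm
      rw [h1, h2, h3, h4]
    · intro v
      have key : (∑ u ∈ G.neighborFinset v, ((f u : ℕ) % p + 1)) % p
          = (∑ u ∈ G.neighborFinset v, ((f u : ℕ) + 1)) % p := by
        rw [Finset.sum_nat_mod,
          Finset.sum_nat_mod (G.neighborFinset v) p (fun u => (f u : ℕ) + 1)]
        congr 1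
        apply Finset.sum_congr rfl
        intro u _
        simp [Nat.add_mod]
      rw [key, hk v]
  · intro h
    obtain ⟨p, hple, hp⟩ := Nat.exists_infinite_primes (n * n + n + 1)
    obtain ⟨f, hmul, μ, hμ⟩ := h p hp
    have hmul' : Multiset.map f Finset.univ.val
        = (Multiset.range n).map (fun i => i + 1) := by
      rw [hmul]
      apply Multiset.map_congr rfl
      intro i hi
      have hi' : i < n := Multiset.mem_range.mp hi
      rw [Nat.mod_eq_of_lt (by omega)]
    have hmem : ∀ v, 1 ≤ f v ∧ f v ≤ n := by
      intro v
      have hv : f v ∈ Multiset.map f Finset.univ.val :=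
        Multiset.mem_map_of_mem _ (by simp)
      rw [hmul'] at hv
      obtain ⟨i, hi, hfi⟩ := Multiset.mem_map.mp hv
      have := Multiset.mem_range.mp hi
      omega
    have hinj : ∀ a b : Fin n, f a = f b → a = b := by
      have hnd : (Multiset.map f Finset.univ.val).Nodup := by
        rw [hmul']
        exact Multiset.Nodup.map (fun a b hab => by omega) (Multiset.nodup_range n)
      intro a b hab
      exact Multiset.inj_on_of_nodup_map hnd a (by simp) b (by simp) hab
    have hw : ∀ v, (∑ u ∈ G.neighborFinset v, f u) < p := by
      intro v
      have h1 : (∑ u ∈ G.neighborFinset v, f u) ≤ ∑ u ∈ G.neighborFinset v, n :=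
        Finset.sum_le_sum (fun u _ => (hmem u).2)
      have h2 : (∑ u ∈ G.neighborFinset v, n) = (G.neighborFinset v).card * n := by
        simp [Finset.sum_const, mul_comm]
      have h3 : (G.neighborFinset v).card ≤ n := by
        have := Finset.card_le_univ (G.neighborFinset v)
        simpa using this
      have h4 : (G.neighborFinset v).card * n ≤ n * n :=
        Nat.mul_le_mul_right n h3
      omega
    have hsum : ∀ v, (∑ u ∈ G.neighborFinset v, f u) = μ % p := by
      intro v
      have := hμ v
      rwa [Nat.mod_eq_of_lt (hw v)] at this
    have e0inj : Function.Injective (fun v : Fin n => (⟨f v - 1, by have := hmem v; omega⟩ : Fin n)) := by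
      intro a b hab
      have hval := congrArg Fin.val hab
      simp at hval
      have ha := hmem a
      have hb := hmem b
      exact hinj a b (by omega)
    refine ⟨Equiv.ofBijective _ ((Finite.injective_iff_bijective).mp e0inj), μ % p, ?_⟩
    intro v
    have hev : ∀ u : Fin n,
        ((Equiv.ofBijective _ ((Finite.injective_iff_bijective).mp e0inj) u : Fin n) : ℕ) + 1 = f u := by
      intro u
      have := hmem u
      simp [Equiv.ofBijective]
      omega
    rw [Finset.sum_congr rfl (fun u _ => hev u), hsum v]
end

section
/- Let G be a graph on n vertices admitting a 2-distance magic labeling f with magic constant 0 (i.e., every vertex weight is even). Let V₁ = {v ∈ V(G) : f(v) = 1} and let G₁ be the subgraph of G induced on V₁. Then every vertex of G₁ has even degree in G₁ (so every component of G₁ is Eulerian). -/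
open Finset

/-- Let `G` admit a `2`-distance magic labeling `f` (a labeling with
value multiset `{1,2,…,n}₂`, i.e. `{(i % 2) + 1 : i ∈ range n}`) with magic constant `0`,
i.e. every vertex weight is even. Then every vertex of the subgraph `G₁` induced on
`V₁ = {v : f v = 1}` has even degree in `G₁` (so every component of `G₁` is Eulerian). -/
theorem two_magic_constant_zero_induced_even_degrees {n : ℕ} (G : SimpleGraph (Fin n))
    [DecidableRel G.Adj] (f : Fin n → ℕ)
    (hmul : Multiset.map f Finset.univ.val = (Multiset.range n).map (fun i => i % 2 + 1))
    (hmagic : ∀ v, (∑ u ∈ G.neighborFinset v, f u) % 2 = 0) :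
    ∀ v, f v = 1 → Even ((G.neighborFinset v).filter (fun u => f u = 1)).card := by
  have hrange : ∀ u : Fin n, f u = 1 ∨ f u = 2 := by
    intro u
    have hu : f u ∈ Multiset.map f Finset.univ.val :=
      Multiset.mem_map_of_mem f (mem_univ u)
    rw [hmul] at hu
    obtain ⟨i, _, hi⟩ := Multiset.mem_map.mp hu
    omega
  intro v _
  have key : (∑ u ∈ G.neighborFinset v, f u) % 2
      = ((G.neighborFinset v).filter (fun u => f u = 1)).card % 2 := by
    rw [Finset.card_filter]
    rw [Finset.sum_nat_mod, Finset.sum_nat_mod _ _ (fun u => if f u = 1 then 1 else 0)]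
    congr 1
    apply Finset.sum_congr rfl
    intro u _
    rcases hrange u with h | h <;> simp [h]
  have := hmagic v
  rw [key] at this
  exact (Nat.even_iff).mpr this
end

section
/- Let G be a graph on n vertices admitting a 2-distance magic labeling f with magic constant 1 (i.e., every vertex weight is odd). Let V₁ = {v ∈ V(G) : f(v) = 1} and let G₁ be the subgraph of G induced on V₁. Then every vertex of G₁ has odd degree in G₁; in particular G₁ has no isolated vertices, and hence G₁ contains a nonempty matching provided V₁ is nonempty. -/
open Finset

/-- Let `G` admit a `2`-distance magic labeling `f` (a labeling with
value multiset `{1,2,…,n}₂`, i.e. `{(i % 2) + 1 : i ∈ range n}`) with magic constant `1`,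
i.e. every vertex weight is odd. Then every vertex of the subgraph `G₁` induced on
`V₁ = {v : f v = 1}` has odd degree in `G₁`; in particular `G₁` has no isolated vertices,
and hence `G₁` contains a nonempty matching (an edge inside `V₁`) provided `V₁ ≠ ∅`. -/
theorem two_magic_constant_one_induced_odd_degrees {n : ℕ} (G : SimpleGraph (Fin n))
    [DecidableRel G.Adj] (f : Fin n → ℕ)
    (hmul : Multiset.map f Finset.univ.val = (Multiset.range n).map (fun i => i % 2 + 1))
    (hmagic : ∀ v, (∑ u ∈ G.neighborFinset v, f u) % 2 = 1) :
    (∀ v, f v = 1 → Odd ((G.neighborFinset v).filter (fun u => f u = 1)).card) ∧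
    ((∃ v, f v = 1) → ∃ u v, G.Adj u v ∧ f u = 1 ∧ f v = 1) := by
  have hval : ∀ v, f v = 1 ∨ f v = 2 := by
    intro v
    have hv : f v ∈ Multiset.map f Finset.univ.val :=
      Multiset.mem_map_of_mem f (Finset.mem_univ v)
    rw [hmul] at hv
    obtain ⟨i, _, hi⟩ := Multiset.mem_map.mp hv
    omega
  have hodd : ∀ v, Odd ((G.neighborFinset v).filter (fun u => f u = 1)).card := by
    intro v
    have key : (∑ u ∈ G.neighborFinset v, f u) % 2
        = ((G.neighborFinset v).filter (fun u => f u = 1)).card % 2 := by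
      rw [Finset.sum_nat_mod]
      congr 1
      rw [Finset.card_filter]
      apply Finset.sum_congr rfl
      intro u _
      rcases hval u with h | h <;> simp [h]
    have := hmagic v
    rw [key] at this
    exact Nat.odd_iff.mpr this
  refine ⟨fun v _ => hodd v, fun ⟨v, hv⟩ => ?_⟩
  have h := hodd v
  have hpos : 0 < ((G.neighborFinset v).filter (fun u => f u = 1)).card := h.pos
  obtain ⟨u, hu⟩ := Finset.card_pos.mp hpos
  rw [Finset.mem_filter, SimpleGraph.mem_neighborFinset] at hu
  exact ⟨v, u, hu.1, hv, hu.2⟩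
end

section
/- Let G be a graph on n vertices and p ≥ 1 an integer such that n(n+1)/2 is a unit in the ring ℤ_p (i.e., gcd(n(n+1)/2, p) = 1). If f and g are p-distance magic labelings of G with magic constants k and l respectively, then k ≡ l (mod p); that is, the p-magic constant of G is unique. -/
open Finset

/-- Let `G` be a graph on `n` vertices and `p ≥ 1` with `n(n+1)/2` a unit
in `ℤ_p`, i.e. `gcd(n(n+1)/2, p) = 1`. If `f` and `g` are `p`-distance magic labelings of
`G` (value multiset `{1,2,…,n}_p`, i.e. `{(i % p) + 1 : i ∈ range n}`) with magic constants
`k` and `l` respectively, then `k ≡ l (mod p)`: the `p`-magic constant is unique. -/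
theorem p_magic_constant_unique {n p : ℕ} (hp : 1 ≤ p)
    (hunit : Nat.Coprime (n * (n + 1) / 2) p)
    (G : SimpleGraph (Fin n)) [DecidableRel G.Adj]
    (f g : Fin n → ℕ) (k l : ℕ)
    (hfmul : Multiset.map f Finset.univ.val = (Multiset.range n).map (fun i => i % p + 1))
    (hfmagic : ∀ v, (∑ u ∈ G.neighborFinset v, f u) % p = k % p)
    (hgmul : Multiset.map g Finset.univ.val = (Multiset.range n).map (fun i => i % p + 1))
    (hgmagic : ∀ v, (∑ u ∈ G.neighborFinset v, g u) % p = l % p) :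
    k % p = l % p := by
  haveI : NeZero p := ⟨by omega⟩
  -- Gauss sum
  have hS : ∑ i ∈ Finset.range n, (i + 1) = n * (n + 1) / 2 := by
    have h1 : ∑ i ∈ Finset.range (n + 1), i = ∑ i ∈ Finset.range n, (i + 1) := by
      rw [Finset.sum_range_succ']
      simp
    have h2 : (∑ i ∈ Finset.range n, (i + 1)) * 2 = n * (n + 1) := by
      rw [← h1, Finset.sum_range_id_mul_two, Nat.add_sub_cancel, Nat.mul_comm]
    omega
  -- the sums of the labels both equal S := n(n+1)/2 mod p
  have hsum : ∀ h : Fin n → ℕ,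
      Multiset.map h Finset.univ.val = (Multiset.range n).map (fun i => i % p + 1) →
      ((∑ v, h v : ℕ) : ZMod p) = ((n * (n + 1) / 2 : ℕ) : ZMod p) := by
    intro h hmul
    have : (∑ v, h v : ℕ) = ∑ i ∈ Finset.range n, (i % p + 1) := by
      show (Multiset.map h Finset.univ.val).sum = _
      rw [hmul]
      rfl
    rw [this, ← hS]
    push_cast
    refine Finset.sum_congr rfl fun i _ => ?_
    rw [ZMod.natCast_mod]
  -- magic conditions in ZMod p
  have hfm : ∀ v, (∑ u ∈ G.neighborFinset v, (f u : ZMod p)) = (k : ZMod p) := by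
    intro v
    have := (ZMod.natCast_eq_natCast_iff' _ _ _).mpr (hfmagic v)
    push_cast at this
    exact this
  have hgm : ∀ v, (∑ u ∈ G.neighborFinset v, (g u : ZMod p)) = (l : ZMod p) := by
    intro v
    have := (ZMod.natCast_eq_natCast_iff' _ _ _).mpr (hgmagic v)
    push_cast at this
    exact this
  -- swap lemma
  have swap : ∀ a b : Fin n → ZMod p,
      (∑ v, ∑ u ∈ G.neighborFinset v, a v * b u)
        = ∑ v, ∑ u ∈ G.neighborFinset v, b v * a u := by
    intro a b
    simp only [SimpleGraph.neighborFinset_eq_filter, Finset.sum_filter]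
    rw [Finset.sum_comm]
    refine Finset.sum_congr rfl fun x _ => Finset.sum_congr rfl fun y _ => ?_
    by_cases h : G.Adj x y
    · rw [if_pos h.symm, if_pos h, mul_comm]
    · rw [if_neg (fun h' => h h'.symm), if_neg h]
  set S : ZMod p := ((n * (n + 1) / 2 : ℕ) : ZMod p) with hSdef
  have hSunit : IsUnit S := (ZMod.isUnit_iff_coprime _ _).mpr hunit
  have key : S * (k : ZMod p) = S * (l : ZMod p) := by
    have hf' := hsum f hfmul
    have hg' := hsum g hgmul
    push_cast at hf' hg'
    calc S * (k : ZMod p) = (∑ v, (g v : ZMod p)) * k := by rw [hg']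
    _ = ∑ v, (g v : ZMod p) * k := by rw [Finset.sum_mul]
    _ = ∑ v, ∑ u ∈ G.neighborFinset v, (g v : ZMod p) * (f u : ZMod p) := by
          refine Finset.sum_congr rfl fun v _ => ?_
          rw [← hfm v, Finset.mul_sum]
    _ = ∑ v, ∑ u ∈ G.neighborFinset v, (f v : ZMod p) * (g u : ZMod p) := swap _ _
    _ = ∑ v, (f v : ZMod p) * l := by
          refine Finset.sum_congr rfl fun v _ => ?_
          rw [← hgm v, Finset.mul_sum]
    _ = (∑ v, (f v : ZMod p)) * l := by rw [Finset.sum_mul]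
    _ = S * l := by rw [hf']
  have := hSunit.mul_left_cancel key
  exact (ZMod.natCast_eq_natCast_iff' _ _ _).mp this
end

section
/- Let G be a graph of order n ≥ 3 with n ≡ 1 (mod 4) or n ≡ 2 (mod 4). If f and g are 2-distance magic labelings of G with magic constants k and l respectively, then k ≡ l (mod 2); that is, the 2-magic constant of G is unique. -/
open Finset

lemma evencount (n : ℕ) : ((Finset.range n).filter (fun i => i % 2 = 0)).card = (n+1)/2 := by
  induction n with
  | zero => simp
  | succ m ih => rw [Finset.range_add_one, Finset.filter_insert]; split <;> simp [ih] <;> omega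

lemma key_zero {n : ℕ} (G : SimpleGraph (Fin n)) [DecidableRel G.Adj]
    (f : Fin n → ℕ) (k : ℕ)
    (hmagic : ∀ v, (∑ u ∈ G.neighborFinset v, f u) % 2 = k % 2)
    (hA : (univ.filter (fun v => f v % 2 = 1)).card % 2 = 1) : k % 2 = 0 := by
  set A := univ.filter (fun v => f v % 2 = 1) with hAdef
  have hcast : ∀ v : Fin n, ((f v : ZMod 2)) = if v ∈ A then 1 else 0 := by
    intro v
    by_cases h : v ∈ A
    · have hv : f v % 2 = 1 := (Finset.mem_filter.mp h).2
      rw [← ZMod.natCast_mod, hv, if_pos h]; rfl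
    · have hv : f v % 2 = 0 := by
        have := (Finset.mem_filter.not.mp h)
        simp only [Finset.mem_univ, true_and] at this
        omega
      rw [← ZMod.natCast_mod, hv, if_neg h]; rfl
  -- the double sum
  have hS1 : (∑ v ∈ A, ∑ u ∈ G.neighborFinset v, (f u : ZMod 2)) = (k : ZMod 2) := by
    have : ∀ v ∈ A, (∑ u ∈ G.neighborFinset v, (f u : ZMod 2)) = (k : ZMod 2) := by
      intro v _
      rw [← Nat.cast_sum, ← ZMod.natCast_mod, hmagic v, ZMod.natCast_mod]
    rw [Finset.sum_congr rfl this, Finset.sum_const, nsmul_eq_mul,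
      ← ZMod.natCast_mod, hA]
    simp
  have hS2 : (∑ v ∈ A, ∑ u ∈ G.neighborFinset v, (f u : ZMod 2)) = 0 := by
    have step : ∀ v ∈ A, (∑ u ∈ G.neighborFinset v, (f u : ZMod 2))
        = ∑ u ∈ A, if G.Adj v u then (1 : ZMod 2) else 0 := by
      intro v _
      rw [SimpleGraph.neighborFinset_eq_filter, Finset.sum_filter, hAdef,
        Finset.sum_filter]
      refine Finset.sum_congr rfl fun u _ => ?_
      rw [hcast u]
      by_cases h1 : G.Adj v u <;> by_cases h2 : u ∈ A <;>
        simp [h1, h2, hAdef, (Finset.mem_filter.mp · |>.2), *] <;>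
        first
        | rfl
        | (simp only [hAdef, Finset.mem_filter, Finset.mem_univ, true_and] at h2; simp [h2])
    rw [Finset.sum_congr rfl step, ← Finset.sum_product']
    refine Finset.sum_involution (fun p _ => p.swap) ?_ ?_ ?_ ?_
    · intro p _
      by_cases h : G.Adj p.1 p.2
      · simp [h, h.symm, Prod.swap]
        rfl
      · have h' : ¬ G.Adj p.2 p.1 := fun hh => h hh.symm
        simp [h, h', Prod.swap]
    · intro p _ hne
      have h : G.Adj p.1 p.2 := by
        by_contra h; simp [h] at hne
      intro hsw
      have : p.2 = p.1 := congrArg Prod.fst hsw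
      exact G.ne_of_adj h this.symm
    · intro p hp
      rw [Finset.mem_product] at hp ⊢
      exact ⟨hp.2, hp.1⟩
    · intro p _; rfl
  have hk : (k : ZMod 2) = 0 := by rw [← hS1, hS2]
  have := (ZMod.natCast_eq_zero_iff k 2).mp hk
  omega

lemma card_odd_labels {n : ℕ} (f : Fin n → ℕ)
    (hmul : Multiset.map f Finset.univ.val = (Multiset.range n).map (fun i => i % 2 + 1)) :
    (univ.filter (fun v => f v % 2 = 1)).card = (n+1)/2 := by
  have h1 : (univ.filter (fun v => f v % 2 = 1)).card
      = Multiset.countP (fun x => x % 2 = 1) (Multiset.map f univ.val) := by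
    rw [Multiset.countP_map, Finset.card, Finset.filter_val]
  rw [h1, hmul, Multiset.countP_map]
  have h2 : Multiset.card (Multiset.filter (fun a => (a % 2 + 1) % 2 = 1)
      (Multiset.range n)) = ((Finset.range n).filter (fun i => i % 2 = 0)).card := by
    rw [Finset.card, Finset.filter_val, Finset.range_val]
    congr 1
    apply Multiset.filter_congr
    intro i _
    omega
  rw [h2, evencount]


/-- Let `G` be a graph of order `n ≥ 3` with `n ≡ 1 (mod 4)` or
`n ≡ 2 (mod 4)`. If `f` and `g` are `2`-distance magic labelings of `G` (value multiset
`{1,2,…,n}₂`, i.e. `{(i % 2) + 1 : i ∈ range n}`) with magic constants `k` and `l`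
respectively, then `k ≡ l (mod 2)`: the `2`-magic constant is unique. -/
theorem two_magic_constant_unique {n : ℕ} (hn : 3 ≤ n)
    (hmod : n % 4 = 1 ∨ n % 4 = 2)
    (G : SimpleGraph (Fin n)) [DecidableRel G.Adj]
    (f g : Fin n → ℕ) (k l : ℕ)
    (hfmul : Multiset.map f Finset.univ.val = (Multiset.range n).map (fun i => i % 2 + 1))
    (hfmagic : ∀ v, (∑ u ∈ G.neighborFinset v, f u) % 2 = k % 2)
    (hgmul : Multiset.map g Finset.univ.val = (Multiset.range n).map (fun i => i % 2 + 1))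
    (hgmagic : ∀ v, (∑ u ∈ G.neighborFinset v, g u) % 2 = l % 2) :
    k % 2 = l % 2 := by
  have hodd : ((n+1)/2) % 2 = 1 := by omega
  have hk := key_zero G f k hfmagic (by rw [card_odd_labels f hfmul]; exact hodd)
  have hl := key_zero G g l hgmagic (by rw [card_odd_labels g hgmul]; exact hodd)
  rw [hk, hl]
end

section
/- Let G be a connected r-regular graph on n vertices with r even, with adjacency matrix A and Laplacian matrix L = rI − A. Let f : V(G) → {1,2,...,n} be a bijection and let x = (f(v₁),...,f(vₙ))ᵀ be the corresponding labeling vector. Then f is a distance magic labeling of G if and only if (L² + A²)x = r²x. -/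
open Finset Matrix

/-- If `y` is an eigenvector of the adjacency matrix of a connected `r`-regular graph
for the eigenvalue `r`, then `y` is constant. -/
lemma eigenvec_const_of_connected {n r : ℕ} (G : SimpleGraph (Fin n))
    [DecidableRel G.Adj]
    (hconn : G.Connected) (hreg : G.IsRegularOfDegree r)
    (y : Fin n → ℝ) (hy : G.adjMatrix ℝ *ᵥ y = (r : ℝ) • y) :
    ∀ u v, y u = y v := by
  have hne : Nonempty (Fin n) := hconn.nonempty
  obtain ⟨v₀, -, hmax⟩ := Finset.exists_max_image (Finset.univ : Finset (Fin n)) y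
    ⟨Classical.arbitrary _, Finset.mem_univ _⟩
  -- one step: a neighbor of a maximizer is a maximizer
  have step : ∀ v, y v = y v₀ → ∀ u, G.Adj v u → y u = y v₀ := by
    intro v hv u hadj
    by_contra hne'
    have hlt : y u < y v₀ := lt_of_le_of_ne (hmax u (Finset.mem_univ _)) hne'
    have hsum : ∑ w ∈ G.neighborFinset v, y w = (r : ℝ) * y v₀ := by
      have := congrFun hy v
      rw [SimpleGraph.adjMatrix_mulVec_apply] at this
      simpa [hv] using this
    have hlt2 : ∑ w ∈ G.neighborFinset v, y w < ∑ _w ∈ G.neighborFinset v, y v₀ := by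
      refine Finset.sum_lt_sum (fun i _ => hmax i (Finset.mem_univ _)) ⟨u, ?_, hlt⟩
      rwa [SimpleGraph.mem_neighborFinset]
    have hdeg : #(G.neighborFinset v) = r := hreg v
    rw [Finset.sum_const, hdeg, nsmul_eq_mul, hsum] at hlt2
    exact lt_irrefl _ hlt2
  -- propagate along walks
  have walk : ∀ {a b : Fin n}, G.Walk a b → y a = y v₀ → y b = y v₀ := by
    intro a b p
    induction p with
    | nil => exact fun h => h
    | cons h p ih => intro ha; exact ih (step _ ha _ h)
  have hall : ∀ v, y v = y v₀ := fun v =>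
    (hconn.preconnected v₀ v).elim (fun p => walk p rfl)
  intro u v; rw [hall u, hall v]

/-- Let `G` be a connected `r`-regular graph (`r` even) on `n` vertices
with adjacency matrix `A` and Laplacian `L = rI − A`. A bijective labeling `f` (labels
`v ↦ f v + 1` in `{1,…,n}`, labeling vector `x`) is a distance magic labeling of `G`
(all weights equal to some constant `k`) if and only if `(L² + A²)x = r²x`. -/
theorem distance_magic_iff_L2_A2 {n r : ℕ} (G : SimpleGraph (Fin n))
    [DecidableRel G.Adj]
    (hconn : G.Connected) (hreg : G.IsRegularOfDegree r) (hr : Even r)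
    (f : Fin n ≃ Fin n)
    (A L : Matrix (Fin n) (Fin n) ℝ)
    (hA : A = G.adjMatrix ℝ)
    (hL : L = (r : ℝ) • (1 : Matrix (Fin n) (Fin n) ℝ) - A)
    (x : Fin n → ℝ) (hx : x = fun v => ((f v : ℕ) + 1 : ℝ)) :
    (∃ k : ℕ, ∀ v, ∑ u ∈ G.neighborFinset v, ((f u : ℕ) + 1) = k) ↔
    (L ^ 2 + A ^ 2) *ᵥ x = ((r : ℝ) ^ 2) • x := by
  -- the weight vector, pointwise
  have hAx : ∀ v, (A *ᵥ x) v = ((∑ u ∈ G.neighborFinset v, ((f u : ℕ) + 1) : ℕ) : ℝ) := by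
    intro v
    rw [hA, SimpleGraph.adjMatrix_mulVec_apply, hx, Nat.cast_sum]
    simp
  -- reduce the matrix equation to `A (A x) = r (A x)`
  have hLv : ∀ z : Fin n → ℝ, L *ᵥ z = (r : ℝ) • z - A *ᵥ z := by
    intro z
    rw [hL, Matrix.sub_mulVec, Matrix.smul_mulVec, Matrix.one_mulVec]
  have hexp : (L ^ 2 + A ^ 2) *ᵥ x
      = ((r : ℝ) ^ 2) • x - ((2 * r : ℝ)) • (A *ᵥ x) + (2 : ℝ) • (A *ᵥ (A *ᵥ x)) := by
    have h1 : (L ^ 2 + A ^ 2) *ᵥ x = L *ᵥ (L *ᵥ x) + A *ᵥ (A *ᵥ x) := by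
      rw [Matrix.add_mulVec, pow_two, pow_two, ← Matrix.mulVec_mulVec, ← Matrix.mulVec_mulVec]
    rw [h1, hLv, hLv, Matrix.mulVec_sub, Matrix.mulVec_smul]
    module
  have key : ((L ^ 2 + A ^ 2) *ᵥ x = ((r : ℝ) ^ 2) • x) ↔
      A *ᵥ (A *ᵥ x) = (r : ℝ) • (A *ᵥ x) := by
    rw [hexp]
    constructor
    · intro h
      have h2 : (2 : ℝ) • (A *ᵥ (A *ᵥ x)) = (2 : ℝ) • ((r : ℝ) • (A *ᵥ x)) := by
        linear_combination (norm := module) h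
      exact smul_right_injective (Fin n → ℝ) two_ne_zero h2
    · intro h
      rw [h]
      module
  rw [key]
  constructor
  · -- distance magic ⟹ eigen equation
    rintro ⟨k, hk⟩
    have hAxc : A *ᵥ x = fun _ => (k : ℝ) := by
      funext v; rw [hAx v, hk v]
    rw [hAxc]
    funext v
    rw [hA, SimpleGraph.adjMatrix_mulVec_apply]
    have hdeg : #(G.neighborFinset v) = r := hreg v
    simp [Finset.sum_const, hdeg, mul_comm]
  · -- eigen equation ⟹ distance magic
    intro h
    have hconst := eigenvec_const_of_connected G hconn hreg (A *ᵥ x) (by rwa [← hA])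
    have hne : Nonempty (Fin n) := hconn.nonempty
    obtain ⟨v₀⟩ := hne
    refine ⟨∑ u ∈ G.neighborFinset v₀, ((f u : ℕ) + 1), fun v => ?_⟩
    have := hconst v v₀
    rw [hAx v, hAx v₀] at this
    exact_mod_cast this
end
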